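/- For every integer t ≥ 1, every numbering of the tournament S_t has local chromatic number at least (t−1)/2, where S_1 is the one-vertex tournament and S_t = Δ(S_{t-1}, S_{t-1}, S_1) for t ≥ 2. -/

import Mathlib

structure Tournament where
  V : Type
  fintype : Fintype V
  adj : V → V → Prop
  asymm : ∀ u v, adj u v → ¬ adj v u
  total : ∀ u v, u ≠ v → adj u v ∨ adj v u

attribute [instance] Tournament.fintype

namespace Tournament

/-- A set of vertices is transitive if it includes no cyclic triangle. -/
def IsTransitiveSet (T : Tournament) (A : Set T.V) : Prop :=
  ∀ a ∈ A, ∀ b ∈ A, ∀ c ∈ A, T.adj a b → T.adj b c → ¬ T.adj c a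

/-- The chromatic number of the subtournament induced on `A`. -/
noncomputable def chiOn (T : Tournament) (A : Set T.V) : ℕ :=
  sInf {k | ∃ C : Fin k → Set T.V, (∀ i, T.IsTransitiveSet (C i)) ∧ A ⊆ ⋃ i, C i}

noncomputable def chi (T : Tournament) : ℕ := T.chiOn Set.univ

def outN (T : Tournament) (v : T.V) : Set T.V := {u | T.adj v u}
def inN (T : Tournament) (v : T.V) : Set T.V := {u | T.adj u v}

/-- The domination number of the subtournament induced on `A`. -/
noncomputable def domOn (T : Tournament) (A : Set T.V) : ℕ :=
  sInf {n | ∃ X : Finset T.V, ↑X ⊆ A ∧ (∀ v ∈ A, v ∉ X → ∃ x ∈ X, T.adj x v) ∧ X.card = n}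

noncomputable def dom (T : Tournament) : ℕ := T.domOn Set.univ

/-- `A ⇒ B`: every edge between `A` and `B` is directed from `A` to `B`. -/
def CompleteTo (T : Tournament) (A B : Set T.V) : Prop :=
  ∀ a ∈ A, ∀ b ∈ B, T.adj a b

def CompletePair (T : Tournament) (A B : Set T.V) : Prop :=
  Disjoint A B ∧ T.CompleteTo A B

/-- `G` has a subtournament inside `A` isomorphic to `H`. -/
def ContainsOn (G : Tournament) (A : Set G.V) (H : Tournament) : Prop :=
  ∃ f : H.V → G.V, Function.Injective f ∧ (∀ u, f u ∈ A) ∧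
    ∀ u v, H.adj u v ↔ G.adj (f u) (f v)

def Contains (G H : Tournament) : Prop := G.ContainsOn Set.univ H

def IsHero (H : Tournament) : Prop :=
  ∃ c > 0, ∀ G : Tournament, ¬ G.Contains H → G.chi < c

def IsRebel (H : Tournament) : Prop :=
  ∃ c > 0, ∀ G : Tournament, ¬ G.Contains H → G.dom < c

/-- The one-vertex tournament. -/
def oneT : Tournament where
  V := PUnit
  fintype := inferInstance
  adj _ _ := False
  asymm := by intro u v h; exact h.elim
  total := by intro u v h; cases u; cases v; exact absurd rfl h

/-- `Δ(H1,H2,H3)`: disjoint copies of `H1,H2,H3` with `A1 ⇒ A2 ⇒ A3 ⇒ A1`. -/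
def delta (H1 H2 H3 : Tournament) : Tournament where
  V := H1.V ⊕ H2.V ⊕ H3.V
  fintype := inferInstance
  adj x y :=
    match x, y with
    | .inl a, .inl b => H1.adj a b
    | .inl _, .inr (.inl _) => True
    | .inl _, .inr (.inr _) => False
    | .inr (.inl _), .inl _ => False
    | .inr (.inl a), .inr (.inl b) => H2.adj a b
    | .inr (.inl _), .inr (.inr _) => True
    | .inr (.inr _), .inl _ => True
    | .inr (.inr _), .inr (.inl _) => False
    | .inr (.inr a), .inr (.inr b) => H3.adj a b
  asymm := by
    rintro (a | a | a) (b | b | b) h <;> simp only at h ⊢ <;>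
      first
        | exact H1.asymm _ _ h
        | exact H2.asymm _ _ h
        | exact H3.asymm _ _ h
        | exact h
        | exact fun h' => h'
  total := by
    rintro (a | a | a) (b | b | b) h <;> simp only at h ⊢ <;>
      first
        | exact H1.total _ _ (by simpa using h)
        | exact H2.total _ _ (by simpa using h)
        | exact H3.total _ _ (by simpa using h)
        | exact Or.inl trivial
        | exact Or.inr trivial

/-- The tournament obtained from disjoint copies of `H1, H2` by directing
all edges from the copy of `H1` to the copy of `H2`. -/
def join2 (H1 H2 : Tournament) : Tournament where
  V := H1.V ⊕ H2.V
  fintype := inferInstance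
  adj x y :=
    match x, y with
    | .inl a, .inl b => H1.adj a b
    | .inl _, .inr _ => True
    | .inr _, .inl _ => False
    | .inr a, .inr b => H2.adj a b
  asymm := by
    rintro (a | a) (b | b) h <;> simp only at h ⊢ <;>
      first
        | exact H1.asymm _ _ h
        | exact H2.asymm _ _ h
        | exact h
        | exact fun h' => h'
  total := by
    rintro (a | a) (b | b) h <;> simp only at h ⊢ <;>
      first
        | exact H1.total _ _ (by simpa using h)
        | exact H2.total _ _ (by simpa using h)
        | exact Or.inl trivial
        | exact Or.inr trivial

/-- The set of backward out-neighbours and forward in-neighbours of the `i`-th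
vertex of the numbering `σ`. -/
def localSet (G : Tournament) {n : ℕ} (σ : Fin n ≃ G.V) (i : Fin n) : Set G.V :=
  {v | ∃ j : Fin n, v = σ j ∧
    ((j < i ∧ G.adj (σ i) (σ j)) ∨ (i < j ∧ G.adj (σ j) (σ i)))}

/-- The numbering `σ` has local chromatic number at most `c`. -/
def LocalChiLE (G : Tournament) {n : ℕ} (σ : Fin n ≃ G.V) (c : ℕ) : Prop :=
  ∀ i : Fin n, G.chiOn (G.localSet σ i) ≤ c
/-- `sAux 0` is the one-vertex tournament `S_1`, and `sAux t` is
`S_{t+1} = Δ(S_t, S_t, S_1)`. -/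
def sAux : ℕ → Tournament
  | 0 => oneT
  | (t+1) => delta (sAux t) (sAux t) oneT

lemma isTransitiveSet_singleton (T : Tournament) (v : T.V) :
    T.IsTransitiveSet {v} := by
  intro a ha b hb c hc hab hbc hca
  simp only [Set.mem_singleton_iff] at ha hb
  subst ha; subst hb
  exact T.asymm _ _ hab hab

lemma chiOn_le (T : Tournament) (A : Set T.V) {k : ℕ}
    (C : Fin k → Set T.V) (h1 : ∀ i, T.IsTransitiveSet (C i)) (h2 : A ⊆ ⋃ i, C i) :
    T.chiOn A ≤ k :=
  Nat.sInf_le ⟨C, h1, h2⟩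

lemma chiOn_mem (T : Tournament) (A : Set T.V) :
    ∃ C : Fin (T.chiOn A) → Set T.V, (∀ i, T.IsTransitiveSet (C i)) ∧ A ⊆ ⋃ i, C i := by
  have hne : {k | ∃ C : Fin k → Set T.V,
      (∀ i, T.IsTransitiveSet (C i)) ∧ A ⊆ ⋃ i, C i}.Nonempty := by
    refine ⟨Fintype.card T.V, fun i => {(Fintype.equivFin T.V).symm i},
      fun i => T.isTransitiveSet_singleton _, fun v _ => ?_⟩
    exact Set.mem_iUnion.2 ⟨Fintype.equivFin T.V v, by simp⟩
  exact Nat.sInf_mem hne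

lemma chiOn_mono (T : Tournament) {A B : Set T.V} (h : A ⊆ B) :
    T.chiOn A ≤ T.chiOn B := by
  obtain ⟨C, h1, h2⟩ := T.chiOn_mem B
  exact T.chiOn_le A C h1 (h.trans h2)

lemma chiOn_union_le (T : Tournament) (A B : Set T.V) :
    T.chiOn (A ∪ B) ≤ T.chiOn A + T.chiOn B := by
  obtain ⟨C, hC1, hC2⟩ := T.chiOn_mem A
  obtain ⟨D, hD1, hD2⟩ := T.chiOn_mem B
  refine T.chiOn_le _ (Fin.addCases C D) (fun i => ?_) ?_
  · exact Fin.addCases (motive := fun i => T.IsTransitiveSet (Fin.addCases C D i))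
      (fun j => by simpa using hC1 j) (fun j => by simpa using hD1 j) i
  · rintro v (hv | hv)
    · obtain ⟨i, hi⟩ := Set.mem_iUnion.1 (hC2 hv)
      refine Set.mem_iUnion.2 ⟨Fin.castAdd _ i, ?_⟩
      simpa using hi
    · obtain ⟨i, hi⟩ := Set.mem_iUnion.1 (hD2 hv)
      refine Set.mem_iUnion.2 ⟨Fin.natAdd _ i, ?_⟩
      simpa using hi

lemma one_le_chiOn (T : Tournament) {A : Set T.V} (h : A.Nonempty) :
    1 ≤ T.chiOn A := by
  obtain ⟨C, _, h2⟩ := T.chiOn_mem A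
  obtain ⟨v, hv⟩ := h
  obtain ⟨i, _⟩ := Set.mem_iUnion.1 (h2 hv)
  exact i.pos

lemma nonempty_of_lt_chiOn (T : Tournament) {A : Set T.V} (h : 0 < T.chiOn A) :
    A.Nonempty := by
  by_contra h'
  rw [Set.not_nonempty_iff_eq_empty] at h'
  subst h'
  have h0 : T.chiOn (∅ : Set T.V) ≤ 0 :=
    T.chiOn_le ∅ (fun i => i.elim0) (fun i => i.elim0) (Set.empty_subset _)
  omega

lemma chi_le_chiOn_range (G H : Tournament) (f : H.V → G.V)
    (hadj : ∀ u v, H.adj u v ↔ G.adj (f u) (f v)) :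
    H.chi ≤ G.chiOn (Set.range f) := by
  obtain ⟨C, h1, h2⟩ := G.chiOn_mem (Set.range f)
  refine H.chiOn_le Set.univ (fun i => f ⁻¹' C i) (fun i => ?_) (fun u _ => ?_)
  · intro a ha b hb c hc hab hbc hca
    exact h1 i (f a) ha (f b) hb (f c) hc ((hadj a b).1 hab) ((hadj b c).1 hbc)
      ((hadj c a).1 hca)
  · obtain ⟨i, hi⟩ := Set.mem_iUnion.1 (h2 ⟨u, rfl⟩)
    exact Set.mem_iUnion.2 ⟨i, hi⟩

lemma chiOn_add_one_le_of_avoid (T : Tournament) (A : Set T.V) {k : ℕ}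
    (C : Fin k → Set T.V) (h1 : ∀ i, T.IsTransitiveSet (C i)) (h2 : A ⊆ ⋃ i, C i)
    (i0 : Fin k) (h3 : ∀ v ∈ A, v ∉ C i0) :
    T.chiOn A + 1 ≤ k := by
  rcases k with _ | k
  · exact i0.elim0
  · have hle : T.chiOn A ≤ k := by
      refine T.chiOn_le A (fun j => C (i0.succAbove j)) (fun j => h1 _) ?_
      intro v hv
      obtain ⟨i, hi⟩ := Set.mem_iUnion.1 (h2 hv)
      have hne : i ≠ i0 := fun h => h3 v hv (h ▸ hi)
      obtain ⟨j, hj⟩ := Fin.exists_succAbove_eq hne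
      exact Set.mem_iUnion.2 ⟨j, hj ▸ hi⟩
    omega

lemma chi_add_one_le_chi_delta (H : Tournament) :
    H.chi + 1 ≤ (delta H H oneT).chi := by
  obtain ⟨C, h1, h2⟩ := (delta H H oneT).chiOn_mem Set.univ
  obtain ⟨i0, hi0⟩ := Set.mem_iUnion.1
    (h2 (Set.mem_univ (Sum.inr (Sum.inr PUnit.unit) : (delta H H oneT).V)))
  have hcase : (∀ a : H.V, (Sum.inl a : (delta H H oneT).V) ∉ C i0) ∨
      (∀ b : H.V, (Sum.inr (Sum.inl b) : (delta H H oneT).V) ∉ C i0) := by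
    by_contra hc
    push_neg at hc
    obtain ⟨⟨a, ha⟩, ⟨b, hb⟩⟩ := hc
    exact h1 i0 _ ha _ hb _ hi0 trivial trivial trivial
  rcases hcase with hmiss | hmiss
  · have hr : H.chi ≤ (delta H H oneT).chiOn (Set.range (Sum.inl : H.V → _)) :=
      chi_le_chiOn_range _ _ _ (fun u v => Iff.rfl)
    have hav := (delta H H oneT).chiOn_add_one_le_of_avoid (Set.range Sum.inl) C h1
      (fun v _ => h2 (Set.mem_univ v)) i0 (by rintro v ⟨a, rfl⟩; exact hmiss a)
    have hcc : (delta H H oneT).chi = (delta H H oneT).chiOn Set.univ := rfl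
    omega
  · have hr : H.chi ≤ (delta H H oneT).chiOn
        (Set.range (fun b : H.V => (Sum.inr (Sum.inl b) : (delta H H oneT).V))) :=
      chi_le_chiOn_range _ _ _ (fun u v => Iff.rfl)
    have hav := (delta H H oneT).chiOn_add_one_le_of_avoid
      (Set.range (fun b : H.V => (Sum.inr (Sum.inl b) : (delta H H oneT).V))) C h1
      (fun v _ => h2 (Set.mem_univ v)) i0 (by rintro v ⟨b, rfl⟩; exact hmiss b)
    have hcc : (delta H H oneT).chi = (delta H H oneT).chiOn Set.univ := rfl
    omega

lemma chi_sAux (s : ℕ) : s + 1 ≤ (sAux s).chi := by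
  induction s with
  | zero => exact (sAux 0).one_le_chiOn ⟨PUnit.unit, Set.mem_univ _⟩
  | succ s ih =>
    have h := chi_add_one_le_chi_delta (sAux s)
    have hEq : sAux (s + 1) = delta (sAux s) (sAux s) oneT := rfl
    rw [hEq]
    omega

lemma chiOn_range_split (T : Tournament) {n : ℕ} (σ : Fin n ≃ T.V) (i0 : Fin n)
    {α : Type} (f : α → T.V) (hf : ∀ a, f a ≠ σ i0) :
    T.chiOn (Set.range f) ≤
      T.chiOn {v | (∃ a, v = f a) ∧ σ.symm v < i0} +
      T.chiOn {v | (∃ a, v = f a) ∧ i0 < σ.symm v} := by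
  refine le_trans (T.chiOn_mono ?_) (T.chiOn_union_le _ _)
  rintro v ⟨a, rfl⟩
  have hne : σ.symm (f a) ≠ i0 := by
    intro h
    have h' := congrArg σ h
    rw [σ.apply_symm_apply] at h'
    exact hf a h'
  rcases lt_or_gt_of_ne hne with h | h
  · exact Or.inl ⟨⟨a, rfl⟩, h⟩
  · exact Or.inr ⟨⟨a, rfl⟩, h⟩

lemma delta_local (H : Tournament) (n : ℕ)
    (σ : Fin n ≃ (delta H H oneT).V) (m : ℕ)
    (hloc : ∀ i, (delta H H oneT).chiOn ((delta H H oneT).localSet σ i) ≤ m) :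
    H.chi ≤ 2 * m := by
  by_cases hm : H.chi ≤ m
  · omega
  push_neg at hm
  -- the singleton vertex z and its position
  have hfA : ∀ a : H.V, (Sum.inl a : (delta H H oneT).V) ≠
      σ (σ.symm (Sum.inr (Sum.inr PUnit.unit))) := by
    intro a h
    exact Sum.inl_ne_inr (h.trans (σ.apply_symm_apply _))
  have hfB : ∀ b : H.V, (Sum.inr (Sum.inl b) : (delta H H oneT).V) ≠
      σ (σ.symm (Sum.inr (Sum.inr PUnit.unit))) := by
    intro b h
    have h' := (Sum.inr_injective (h.trans (σ.apply_symm_apply _)))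
    exact Sum.inl_ne_inr h'
  -- the part of the copy of A before z is in the local set of z
  have hAmL : {v : (delta H H oneT).V | (∃ a, v = Sum.inl a) ∧
      σ.symm v < σ.symm (Sum.inr (Sum.inr PUnit.unit))} ⊆
      (delta H H oneT).localSet σ (σ.symm (Sum.inr (Sum.inr PUnit.unit))) := by
    rintro v ⟨⟨a, rfl⟩, hlt⟩
    exact ⟨σ.symm (Sum.inl a), (σ.apply_symm_apply _).symm,
      Or.inl ⟨hlt, cast (congrArg₂ (delta H H oneT).adj (σ.apply_symm_apply _)
        (σ.apply_symm_apply _)).symm trivial⟩⟩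
  -- the part of the copy of B after z is in the local set of z
  have hBpL : {v : (delta H H oneT).V | (∃ b, v = Sum.inr (Sum.inl b)) ∧
      σ.symm (Sum.inr (Sum.inr PUnit.unit)) < σ.symm v} ⊆
      (delta H H oneT).localSet σ (σ.symm (Sum.inr (Sum.inr PUnit.unit))) := by
    rintro v ⟨⟨b, rfl⟩, hgt⟩
    exact ⟨σ.symm (Sum.inr (Sum.inl b)), (σ.apply_symm_apply _).symm,
      Or.inr ⟨hgt, cast (congrArg₂ (delta H H oneT).adj (σ.apply_symm_apply _)
        (σ.apply_symm_apply _)).symm trivial⟩⟩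
  have hA1 : H.chi ≤ (delta H H oneT).chiOn
      (Set.range (Sum.inl : H.V → (delta H H oneT).V)) :=
    chi_le_chiOn_range _ _ _ (fun u v => Iff.rfl)
  have hA2 := chiOn_range_split (delta H H oneT) σ
    (σ.symm (Sum.inr (Sum.inr PUnit.unit))) (Sum.inl : H.V → (delta H H oneT).V) hfA
  have hA3 : (delta H H oneT).chiOn {v : (delta H H oneT).V | (∃ a, v = Sum.inl a) ∧
      σ.symm v < σ.symm (Sum.inr (Sum.inr PUnit.unit))} ≤ m :=
    le_trans ((delta H H oneT).chiOn_mono hAmL) (hloc _)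
  have hA4 : H.chi ≤ m + (delta H H oneT).chiOn {v : (delta H H oneT).V |
      (∃ a, v = Sum.inl a) ∧ σ.symm (Sum.inr (Sum.inr PUnit.unit)) < σ.symm v} :=
    le_trans hA1 (le_trans hA2 (Nat.add_le_add hA3 le_rfl))
  have hApos : 0 < (delta H H oneT).chiOn {v : (delta H H oneT).V |
      (∃ a, v = Sum.inl a) ∧ σ.symm (Sum.inr (Sum.inr PUnit.unit)) < σ.symm v} := by
    omega
  obtain ⟨v0, ⟨a0, hv0⟩, hgt⟩ := (delta H H oneT).nonempty_of_lt_chiOn hApos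
  -- the part of the copy of B before z is in the local set of v0
  have hBmL : {w : (delta H H oneT).V | (∃ b, w = Sum.inr (Sum.inl b)) ∧
      σ.symm w < σ.symm (Sum.inr (Sum.inr PUnit.unit))} ⊆
      (delta H H oneT).localSet σ (σ.symm v0) := by
    rintro w ⟨⟨b, rfl⟩, hlt⟩
    refine ⟨σ.symm (Sum.inr (Sum.inl b)), (σ.apply_symm_apply _).symm,
      Or.inl ⟨lt_trans hlt hgt, ?_⟩⟩
    subst hv0
    exact cast (congrArg₂ (delta H H oneT).adj (σ.apply_symm_apply _)
      (σ.apply_symm_apply _)).symm trivial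
  have hB1 : H.chi ≤ (delta H H oneT).chiOn
      (Set.range (fun b : H.V => (Sum.inr (Sum.inl b) : (delta H H oneT).V))) :=
    chi_le_chiOn_range _ _ _ (fun u v => Iff.rfl)
  have hB2 := chiOn_range_split (delta H H oneT) σ
    (σ.symm (Sum.inr (Sum.inr PUnit.unit)))
    (fun b : H.V => (Sum.inr (Sum.inl b) : (delta H H oneT).V)) hfB
  have hB3 : (delta H H oneT).chiOn {v : (delta H H oneT).V |
      (∃ b, v = (fun b : H.V => (Sum.inr (Sum.inl b) : (delta H H oneT).V)) b) ∧
      σ.symm v < σ.symm (Sum.inr (Sum.inr PUnit.unit))} ≤ m :=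
    le_trans ((delta H H oneT).chiOn_mono (fun w hw => hBmL hw)) (hloc _)
  have hB4 : (delta H H oneT).chiOn {v : (delta H H oneT).V |
      (∃ b, v = (fun b : H.V => (Sum.inr (Sum.inl b) : (delta H H oneT).V)) b) ∧
      σ.symm (Sum.inr (Sum.inr PUnit.unit)) < σ.symm v} ≤ m :=
    le_trans ((delta H H oneT).chiOn_mono (fun w hw => hBpL hw)) (hloc _)
  have hB5 : H.chi ≤ m + m := le_trans hB1 (le_trans hB2 (Nat.add_le_add hB3 hB4))
  omega

end Tournament

open Tournament in
/-- Every numbering of `S_t` has local chromatic number at least `(t-1)/2`: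
some vertex's set of backward out-neighbours and forward in-neighbours `L`
satisfies `2·χ(L) ≥ t - 1`. -/
theorem sTour_local_chi (t : ℕ) (ht : 1 ≤ t)
    (σ : Fin (Fintype.card (sAux (t - 1)).V) ≃ (sAux (t - 1)).V) :
    ∃ i, t - 1 ≤ 2 * (sAux (t - 1)).chiOn ((sAux (t - 1)).localSet σ i) := by
  obtain ⟨s, rfl⟩ : ∃ s, t = s + 1 := ⟨t - 1, by omega⟩
  cases s with
  | zero =>
    haveI : Nonempty (sAux 0).V := ⟨PUnit.unit⟩
    exact ⟨⟨0, Fintype.card_pos⟩, Nat.zero_le _⟩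
  | succ s =>
    by_contra hcon
    push_neg at hcon
    have hloc : ∀ i, (sAux (s + 1 + 1 - 1)).chiOn
        ((sAux (s + 1 + 1 - 1)).localSet σ i) ≤ s / 2 :=
      fun i => by have := hcon i; omega
    have h1 : (sAux s).chi ≤ 2 * (s / 2) :=
      delta_local (sAux s) (Fintype.card (sAux (s + 1 + 1 - 1)).V) σ (s / 2) hloc
    have h2 := chi_sAux s
    omega
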